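/- Let Γ be a connection on the trivial biextension T₁ × T₂ × T₃ of (T₁, T₂) by T₃ (T₁, T₂, T₃ complex vector spaces), given by a field of forms Γ_{t₁,t₂}(t₁′ + t₂′). Then Γ is compatible with the two partial group laws of the biextension (i.e. defines a ♮-structure) if and only if Γ_{t₁,t₂}(t₁′ + t₂′) = γ₁(t₁, t₂′) + γ₂(t₁′, t₂) for some bilinear maps γ₁, γ₂ : appropriate factors → T₃; and in that case the curvature R of Γ is R(t₁′+t₂′, t₁″+t₂″) = (γ₁ − γ₂)(t₁′, t₂″) − (γ₁ − γ₂)(t₁″, t₂′), i.e. the associated pairing Υ : T₁ ⊗ T₂ → T₃ equals γ₁ − γ₂. -/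

import Mathlib

/-- Let `T₁, T₂, T₃` be complex vector spaces and let `Γ` be a connection
on the trivial biextension `T₁ × T₂ × T₃` of `(T₁, T₂)` by `T₃`: a field assigning to
each base point `(t₁, t₂)` a `T₃`-valued linear form `Γ_{t₁,t₂}(t₁′ + t₂′)` on tangent
vectors.  Compatibility with the two partial group laws (horizontality of the structure
maps, i.e. a `♮`-structure) means
`Γ_{t₁+s₁,t₂}(v₁+w₁, v₂) = Γ_{t₁,t₂}(v₁, v₂) + Γ_{s₁,t₂}(w₁, v₂)` and
`Γ_{t₁,t₂+s₂}(v₁, v₂+w₂) = Γ_{t₁,t₂}(v₁, v₂) + Γ_{t₁,s₂}(v₁, w₂)`.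
Then `Γ` defines a `♮`-structure iff `Γ_{t₁,t₂}(t₁′ + t₂′) = γ₁(t₁, t₂′) + γ₂(t₁′, t₂)`
for bilinear maps `γ₁ : T₁ × T₂ → T₃`, `γ₂ : T₁ × T₂ → T₃`; and in that case the
curvature `R((t₁′,t₂′),(t₁″,t₂″)) = Γ_{t₁′,t₂′}(t₁″+t₂″) − Γ_{t₁″,t₂″}(t₁′+t₂′)` equals
`(γ₁ − γ₂)(t₁′, t₂″) − (γ₁ − γ₂)(t₁″, t₂′)`, i.e. the associated pairing
`Υ : T₁ ⊗ T₂ → T₃` is `γ₁ − γ₂`. -/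
theorem natural_structure_trivial_biextension
    (T₁ T₂ T₃ : Type) [AddCommGroup T₁] [Module ℂ T₁] [AddCommGroup T₂] [Module ℂ T₂]
    [AddCommGroup T₃] [Module ℂ T₃]
    (Γ : T₁ → T₂ → (T₁ × T₂ →ₗ[ℂ] T₃)) :
    -- (i) the ♮-compatibility criterion
    (((∀ t₁ s₁ t₂ v₁ w₁ v₂,
        Γ (t₁ + s₁) t₂ (v₁ + w₁, v₂) = Γ t₁ t₂ (v₁, v₂) + Γ s₁ t₂ (w₁, v₂)) ∧
      (∀ t₁ t₂ s₂ v₁ v₂ w₂,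
        Γ t₁ (t₂ + s₂) (v₁, v₂ + w₂) = Γ t₁ t₂ (v₁, v₂) + Γ t₁ s₂ (v₁, w₂)))
      ↔
      (∃ (γ₁ : T₁ → (T₂ →ₗ[ℂ] T₃)) (γ₂ : T₂ → (T₁ →ₗ[ℂ] T₃)),
        (∀ a b : T₁, γ₁ (a + b) = γ₁ a + γ₁ b) ∧
        (∀ a b : T₂, γ₂ (a + b) = γ₂ a + γ₂ b) ∧
        (∀ t₁ t₂ v₁ v₂, Γ t₁ t₂ (v₁, v₂) = γ₁ t₁ v₂ + γ₂ t₂ v₁))) ∧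
    -- (ii) the curvature of such a ♮-structure is Υ = γ₁ − γ₂
    (∀ (γ₁ : T₁ → (T₂ →ₗ[ℂ] T₃)) (γ₂ : T₂ → (T₁ →ₗ[ℂ] T₃)),
      (∀ a b : T₁, γ₁ (a + b) = γ₁ a + γ₁ b) →
      (∀ a b : T₂, γ₂ (a + b) = γ₂ a + γ₂ b) →
      (∀ t₁ t₂ v₁ v₂, Γ t₁ t₂ (v₁, v₂) = γ₁ t₁ v₂ + γ₂ t₂ v₁) →
      ∀ t₁' t₂' t₁'' t₂'',
        Γ t₁' t₂' (t₁'', t₂'') - Γ t₁'' t₂'' (t₁', t₂')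
          = (γ₁ t₁' t₂'' - γ₂ t₂'' t₁') - (γ₁ t₁'' t₂' - γ₂ t₂' t₁'')) := by
  constructor
  · constructor
    · rintro ⟨h1, h2⟩
      refine ⟨fun t₁ => (Γ t₁ 0).comp (LinearMap.inr ℂ T₁ T₂),
              fun t₂ => (Γ 0 t₂).comp (LinearMap.inl ℂ T₁ T₂), ?_, ?_, ?_⟩
      · intro a b
        ext v₂
        simpa using h1 a b 0 0 0 v₂
      · intro a b
        ext v₁
        simpa using h2 0 a b v₁ 0 0
      · intro t₁ t₂ v₁ v₂
        have hsplit : Γ t₁ t₂ (v₁, v₂) = Γ t₁ t₂ (v₁, 0) + Γ t₁ t₂ (0, v₂) := by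
          rw [← map_add]; norm_num
        have e1 : Γ t₁ t₂ (v₁, 0) = Γ 0 t₂ (v₁, 0) := by
          have := h1 t₁ 0 t₂ 0 v₁ 0
          rw [show ((0:T₁), (0:T₂)) = 0 from rfl, map_zero] at this
          simpa using this
        have e2 : Γ t₁ t₂ (0, v₂) = Γ t₁ 0 (0, v₂) := by
          have := h2 t₁ t₂ 0 0 0 v₂
          rw [show ((0:T₁), (0:T₂)) = 0 from rfl, map_zero] at this
          simpa using this
        simp only [LinearMap.comp_apply, LinearMap.inr_apply, LinearMap.inl_apply]
        rw [hsplit, e1, e2]; abel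
    · rintro ⟨γ₁, γ₂, ha1, ha2, heq⟩
      constructor
      · intro t₁ s₁ t₂ v₁ w₁ v₂
        simp only [heq, ha1, LinearMap.add_apply, map_add]
        abel
      · intro t₁ t₂ s₂ v₁ v₂ w₂
        simp only [heq, ha2, LinearMap.add_apply, map_add]
        abel
  · intro γ₁ γ₂ ha1 ha2 heq t₁' t₂' t₁'' t₂''
    rw [heq, heq]; abel
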